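/- arXiv:2409.17511 — 2 statements merged into one kernel-verified Lean document; each statement's English description precedes it below -/
import Mathlib

section
/- Fix i ∈ [n]. If there is a time T such that |E_t| − |N_i(t)| ≥ 1 for all t ≥ T, then the sequence x_i(t) converges as t → ∞. -/
open Finset
open scoped Classical

/-- The threshold graph `G_t`: social neighbors whose garbage differs by at most `ε`. -/
def Gt {n : ℕ} (G : SimpleGraph (Fin n)) (x : ℕ → Fin n → ℝ) (ε : ℝ) (t : ℕ) :
    SimpleGraph (Fin n) where
  Adj i j := G.Adj i j ∧ |x t i - x t j| ≤ ε
  symm := by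
    refine ⟨fun i j h => ?_⟩
    exact ⟨h.1.symm, by rw [abs_sub_comm]; exact h.2⟩
  loopless := by
    refine ⟨fun i h => ?_⟩
    exact G.irrefl h.1

/-- `|E_t|`: the number of edges of `G_t`. -/
noncomputable def Ecard {n : ℕ} (G : SimpleGraph (Fin n)) (x : ℕ → Fin n → ℝ) (ε : ℝ)
    (t : ℕ) : ℕ :=
  (Gt G x ε t).edgeSet.ncard

/-- `N_i(t)`: the neighbors of `i` in `G_t`, as a finset. -/
noncomputable def Nb {n : ℕ} (G : SimpleGraph (Fin n)) (x : ℕ → Fin n → ℝ) (ε : ℝ)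
    (t : ℕ) (i : Fin n) : Finset (Fin n) :=
  Finset.univ.filter fun j => (Gt G x ε t).Adj i j

/-- The update rule of the garbage disposal game. -/
def Update {n : ℕ} (G : SimpleGraph (Fin n)) (x : ℕ → Fin n → ℝ) (ε : ℝ) : Prop :=
  ∀ t i,
    x (t + 1) i =
      (if (Gt G x ε t).edgeSet.Nonempty then (1 : ℝ) else 0) / (Ecard G x ε t : ℝ) *
          ∑ j ∈ Nb G x ε t i, x t j +
        (1 - ((Nb G x ε t i).card : ℝ) / (Ecard G x ε t : ℝ) *
            (if (Gt G x ε t).edgeSet.Nonempty then (1 : ℝ) else 0)) * x t i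

/-- The Lyapunov functional `Z_t`. -/
noncomputable def Z {n : ℕ} (G : SimpleGraph (Fin n)) (x : ℕ → Fin n → ℝ) (ε : ℝ)
    (t : ℕ) : ℝ :=
  ∑ i, ∑ j,
    max (min (ε ^ 2) ((x t i - x t j) ^ 2)) (ε ^ 2 * if ¬ G.Adj i j then 1 else 0)

lemma aux_weighted_min {n : ℕ} (y : Fin n → ℝ) (F : Finset (Fin n)) (c : ℝ)
    (hF1 : ∀ j ∈ F, y j ≤ c) (hF2 : ∀ j ∉ F, c ≤ y j) (w : Fin n → ℝ)
    (hw0 : ∀ j, 0 ≤ w j) (hw1 : ∀ j, w j ≤ 1) (hws : ∑ j, w j = (F.card : ℝ)) :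
    ∑ j ∈ F, y j ≤ ∑ j, w j * y j := by
  have key : ∀ j, 0 ≤ (w j - if j ∈ F then (1:ℝ) else 0) * (y j - c) := by
    intro j
    by_cases hj : j ∈ F
    · simp only [hj, if_pos]
      have h := mul_nonneg (sub_nonneg.2 (hw1 j)) (sub_nonneg.2 (hF1 j hj))
      nlinarith [h]
    · simp only [hj, if_neg, not_false_iff]
      have h := mul_nonneg (hw0 j) (sub_nonneg.2 (hF2 j hj))
      nlinarith [h]
  have hsum : (0:ℝ) ≤ ∑ j, (w j - if j ∈ F then (1:ℝ) else 0) * (y j - c) :=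
    Finset.sum_nonneg fun j _ => key j
  have expand : ∑ j, (w j - if j ∈ F then (1:ℝ) else 0) * (y j - c)
      = (∑ j, w j * y j) - c * (∑ j, w j)
        - (∑ j ∈ F, y j) + c * (F.card : ℝ) := by
    have h1 : ∑ j, (if j ∈ F then (1:ℝ) else 0) * y j = ∑ j ∈ F, y j := by
      simp [ite_mul, Finset.sum_ite_mem, Finset.univ_inter]
    have h2 : ∑ j, (if j ∈ F then (1:ℝ) else 0) = (F.card : ℝ) := by
      simp [Finset.sum_ite_mem, Finset.univ_inter]
    calc ∑ j, (w j - if j ∈ F then (1:ℝ) else 0) * (y j - c)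
        = ∑ j, (w j * y j - c * w j
            - (if j ∈ F then (1:ℝ) else 0) * y j
            + c * (if j ∈ F then (1:ℝ) else 0)) := by
          apply Finset.sum_congr rfl; intro j _; ring
      _ = _ := by
          rw [Finset.sum_add_distrib, Finset.sum_sub_distrib, Finset.sum_sub_distrib,
            ← Finset.mul_sum, ← Finset.mul_sum, h1, h2]
  rw [expand, hws] at hsum
  linarith

lemma aux_jensen_sq_core {n : ℕ} (y w : Fin n → ℝ) (hws : ∑ j, w j = 1) :
    ∑ j, w j * (y j - ∑ l, w l * y l)^2
      = (∑ j, w j * (y j)^2) - (∑ j, w j * y j)^2 := by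
  set μ := ∑ l, w l * y l with hμ
  have : ∑ j, w j * (y j - μ)^2
      = ∑ j, (w j * (y j)^2 - 2 * μ * (w j * y j) + μ^2 * w j) := by
    apply Finset.sum_congr rfl; intro j _; ring
  rw [this, Finset.sum_add_distrib, Finset.sum_sub_distrib, ← Finset.mul_sum,
    ← Finset.mul_sum, hws, ← hμ]
  ring

lemma aux_jensen_sq {n : ℕ} (y w : Fin n → ℝ) (hw0 : ∀ j, 0 ≤ w j)
    (hws : ∑ j, w j = 1) :
    (∑ j, w j * y j)^2 ≤ ∑ j, w j * (y j)^2 := by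
  have h := aux_jensen_sq_core y w hws
  have h2 : (0:ℝ) ≤ ∑ j, w j * (y j - ∑ l, w l * y l)^2 :=
    Finset.sum_nonneg fun j _ => mul_nonneg (hw0 j) (sq_nonneg _)
  linarith

lemma aux_jensen_sq_defect {n : ℕ} (y w : Fin n → ℝ) (hw0 : ∀ j, 0 ≤ w j)
    (hws : ∑ j, w j = 1) (p q : Fin n) (hpq : p ≠ q) :
    (∑ j, w j * y j)^2 + w p * w q * (y p - y q)^2 ≤ ∑ j, w j * (y j)^2 := by
  have h := aux_jensen_sq_core y w hws
  set μ := ∑ l, w l * y l with hμ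
  have hsub : w p * (y p - μ)^2 + w q * (y q - μ)^2 ≤ ∑ j, w j * (y j - μ)^2 := by
    have : ∑ j ∈ ({p, q} : Finset (Fin n)), w j * (y j - μ)^2
        = w p * (y p - μ)^2 + w q * (y q - μ)^2 := Finset.sum_pair hpq
    rw [← this]
    exact Finset.sum_le_sum_of_subset_of_nonneg (Finset.subset_univ _)
      (fun j _ _ => mul_nonneg (hw0 j) (sq_nonneg _))
  have hwpq : w p + w q ≤ 1 := by
    have : ∑ j ∈ ({p, q} : Finset (Fin n)), w j = w p + w q := Finset.sum_pair hpq
    rw [← this, ← hws]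
    exact Finset.sum_le_sum_of_subset_of_nonneg (Finset.subset_univ _)
      (fun j _ _ => hw0 j)
  have hkey : w p * w q * (y p - y q)^2
      ≤ w p * (y p - μ)^2 + w q * (y q - μ)^2 := by
    nlinarith [sq_nonneg (w p * (y p - μ) + w q * (y q - μ)), hw0 p, hw0 q,
      sq_nonneg (y p - μ), sq_nonneg (y q - μ),
      mul_nonneg (hw0 p) (sq_nonneg (y p - μ)),
      mul_nonneg (hw0 q) (sq_nonneg (y q - μ))]
  linarith

lemma aux_sep_exists {n : ℕ} (y : Fin n → ℝ) :
    ∀ k : ℕ, 0 < k → k ≤ n → ∃ (F : Finset (Fin n)) (c : ℝ),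
      F.card = k ∧ (∀ j ∈ F, y j ≤ c) ∧ (∀ j ∉ F, c ≤ y j) := by
  intro k
  induction k with
  | zero => intro h; exact absurd h (lt_irrefl 0)
  | succ k ih =>
    intro _ hkn
    by_cases hk : 0 < k
    · obtain ⟨F, c, hcard, h1, h2⟩ := ih hk (Nat.le_of_succ_le hkn)
      have hcompl : (Finset.univ \ F).Nonempty := by
        rw [← Finset.card_pos, Finset.card_sdiff_of_subset (Finset.subset_univ _)]
        simp only [Finset.card_univ, Fintype.card_fin, hcard]
        omega
      obtain ⟨j0, hj0mem, hj0min⟩ := Finset.exists_min_image _ y hcompl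
      have hj0F : j0 ∉ F := (Finset.mem_sdiff.mp hj0mem).2
      refine ⟨insert j0 F, y j0, ?_, ?_, ?_⟩
      · rw [Finset.card_insert_of_notMem hj0F, hcard]
      · intro j hj
        rcases Finset.mem_insert.mp hj with h | hjF
        · rw [h]
        · exact le_trans (h1 j hjF) (h2 j0 hj0F)
      · intro j hj
        have hjF : j ∉ F := fun hc => hj (Finset.mem_insert_of_mem hc)
        exact hj0min j (Finset.mem_sdiff.mpr ⟨Finset.mem_univ _, hjF⟩)
    · have hk0 : k = 0 := by omega
      subst hk0
      have huniv : (Finset.univ : Finset (Fin n)).Nonempty := by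
        rw [← Finset.card_pos]
        simp only [Finset.card_univ, Fintype.card_fin]
        omega
      obtain ⟨j0, _, hj0min⟩ := Finset.exists_min_image _ y huniv
      refine ⟨{j0}, y j0, by simp, ?_, ?_⟩
      · intro j hj; rw [Finset.mem_singleton.mp hj]
      · intro j _; exact hj0min j (Finset.mem_univ j)

noncomputable def sumMin {n : ℕ} (y : Fin n → ℝ) (k : ℕ) : ℝ :=
  if h : (Finset.powersetCard k (Finset.univ : Finset (Fin n))).Nonempty then
    (Finset.powersetCard k (Finset.univ : Finset (Fin n))).inf' h (fun S => ∑ j ∈ S, y j)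
  else 0

lemma sumMin_le {n : ℕ} (y : Fin n → ℝ) {k : ℕ} {S : Finset (Fin n)}
    (hS : S.card = k) : sumMin y k ≤ ∑ j ∈ S, y j := by
  have hmem : S ∈ Finset.powersetCard k (Finset.univ : Finset (Fin n)) :=
    Finset.mem_powersetCard.mpr ⟨Finset.subset_univ _, hS⟩
  rw [sumMin, dif_pos ⟨S, hmem⟩]
  exact Finset.inf'_le _ hmem

lemma sumMin_exists {n : ℕ} (y : Fin n → ℝ) {k : ℕ} (hk : k ≤ n) :
    ∃ S : Finset (Fin n), S.card = k ∧ sumMin y k = ∑ j ∈ S, y j := by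
  have hne : (Finset.powersetCard k (Finset.univ : Finset (Fin n))).Nonempty := by
    rw [Finset.powersetCard_nonempty]; simpa using hk
  obtain ⟨S, hS, hval⟩ := Finset.exists_mem_eq_inf' hne (fun S => ∑ j ∈ S, y j)
  exact ⟨S, (Finset.mem_powersetCard.mp hS).2, by rw [sumMin, dif_pos hne]; exact hval⟩

lemma sumMin_zero {n : ℕ} (y : Fin n → ℝ) : sumMin y 0 = 0 := by
  obtain ⟨S, hS, hval⟩ := sumMin_exists y (Nat.zero_le n)
  rw [hval, Finset.card_eq_zero.mp hS, Finset.sum_empty]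

lemma sumMin_le_weighted {n : ℕ} (y : Fin n → ℝ) (hy : ∀ j, 0 ≤ y j) {k : ℕ}
    (hk : k ≤ n) (w : Fin n → ℝ) (hw0 : ∀ j, 0 ≤ w j) (hw1 : ∀ j, w j ≤ 1)
    (hws : ∑ j, w j = (k : ℝ)) : sumMin y k ≤ ∑ j, w j * y j := by
  by_cases hk0 : 0 < k
  · obtain ⟨F, c, hcard, h1, h2⟩ := aux_sep_exists y k hk0 hk
    calc sumMin y k ≤ ∑ j ∈ F, y j := sumMin_le y hcard
      _ ≤ ∑ j, w j * y j :=
          aux_weighted_min y F c h1 h2 w hw0 hw1 (by rw [hcard]; exact hws)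
  · have : k = 0 := by omega
    subst this
    rw [sumMin_zero]
    exact Finset.sum_nonneg fun j _ => mul_nonneg (hw0 j) (hy j)

lemma sumMin_eq_of_sep {n : ℕ} (y : Fin n → ℝ) {k : ℕ} (hk : k ≤ n)
    (F : Finset (Fin n)) (c : ℝ) (hcard : F.card = k)
    (h1 : ∀ j ∈ F, y j ≤ c) (h2 : ∀ j ∉ F, c ≤ y j) :
    sumMin y k = ∑ j ∈ F, y j := by
  refine le_antisymm (sumMin_le y hcard) ?_
  obtain ⟨S, hS, hval⟩ := sumMin_exists y hk
  rw [hval]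
  have := aux_weighted_min y F c h1 h2 (fun j => if j ∈ S then (1:ℝ) else 0)
    (fun j => by by_cases hj : j ∈ S <;> simp [hj]) (fun j => by by_cases hj : j ∈ S <;> simp [hj])
    (by simp [Finset.sum_ite_mem, Finset.univ_inter, hS, hcard])
  refine le_trans this (le_of_eq ?_)
  simp [ite_mul, Finset.sum_ite_mem, Finset.univ_inter]

section Aux
variable {n : ℕ} (G : SimpleGraph (Fin n)) (x : ℕ → Fin n → ℝ) (ε : ℝ)

/-- The averaging weight matrix at time `t`. -/
noncomputable def Wt (t : ℕ) (j k : Fin n) : ℝ :=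
  (if k ∈ Nb G x ε t j then 1/(Ecard G x ε t : ℝ) else 0) +
  (if k = j then 1 - ((Nb G x ε t j).card : ℝ)/(Ecard G x ε t : ℝ) else 0)

lemma aux_mem_Nb {t : ℕ} {j k : Fin n} : k ∈ Nb G x ε t j ↔ (Gt G x ε t).Adj j k := by
  simp [Nb]

lemma aux_not_mem_Nb_self (t : ℕ) (j : Fin n) : j ∉ Nb G x ε t j := by
  simp [Nb]

lemma aux_Nb_symm {t : ℕ} {j k : Fin n} : k ∈ Nb G x ε t j ↔ j ∈ Nb G x ε t k := by
  rw [aux_mem_Nb, aux_mem_Nb, (Gt G x ε t).adj_comm]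

lemma aux_Ecard_pos (t : ℕ) (hP : (Gt G x ε t).edgeSet.Nonempty) :
    0 < Ecard G x ε t :=
  (Set.ncard_pos (Set.toFinite _)).mpr hP

lemma aux_card_Nb_le (t : ℕ) (j : Fin n) :
    (Nb G x ε t j).card ≤ Ecard G x ε t := by
  rw [Ecard, Set.ncard_eq_toFinset_card']
  apply Finset.card_le_card_of_injOn (fun k => s(j, k))
  · intro k hk
    simp only [Finset.mem_coe, Set.mem_toFinset, SimpleGraph.mem_edgeSet]
    exact (aux_mem_Nb G x ε).mp hk
  · intro a _ b _ hab
    exact Sym2.congr_right.mp hab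

lemma aux_Wt_nonneg (t : ℕ) (j k : Fin n) : 0 ≤ Wt G x ε t j k := by
  apply add_nonneg
  · split
    · positivity
    · exact le_refl 0
  · split
    · have h1 := aux_card_Nb_le G x ε t j
      have h2 : ((Nb G x ε t j).card : ℝ) / (Ecard G x ε t : ℝ) ≤ 1 := by
        rcases Nat.eq_zero_or_pos (Ecard G x ε t) with h | h
        · simp [h]
        · rw [div_le_one (by exact_mod_cast h)]
          exact_mod_cast h1
      linarith
    · exact le_refl 0

lemma aux_Wt_symm (t : ℕ) (j k : Fin n) : Wt G x ε t j k = Wt G x ε t k j := by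
  by_cases hkj : k = j
  · subst hkj; rfl
  · unfold Wt
    rw [if_neg hkj, if_neg (Ne.symm hkj)]
    congr 1
    by_cases hmem : k ∈ Nb G x ε t j
    · rw [if_pos hmem, if_pos ((aux_Nb_symm G x ε).mp hmem)]
    · rw [if_neg hmem, if_neg (fun hc => hmem ((aux_Nb_symm G x ε).mpr hc))]

lemma aux_row_sum (t : ℕ) (hP : (Gt G x ε t).edgeSet.Nonempty) (j : Fin n) :
    ∑ k, Wt G x ε t j k = 1 := by
  unfold Wt
  rw [Finset.sum_add_distrib, Finset.sum_ite_eq' Finset.univ j, if_pos (Finset.mem_univ j)]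
  have h1 : ∑ k, (if k ∈ Nb G x ε t j then 1/(Ecard G x ε t : ℝ) else 0)
      = ((Nb G x ε t j).card : ℝ) / (Ecard G x ε t : ℝ) := by
    rw [Finset.sum_ite_mem, Finset.univ_inter, Finset.sum_const, nsmul_eq_mul]
    ring
  rw [h1]
  ring

lemma aux_col_sum (t : ℕ) (hP : (Gt G x ε t).edgeSet.Nonempty) (k : Fin n) :
    ∑ j, Wt G x ε t j k = 1 := by
  rw [Finset.sum_congr rfl (fun j _ => aux_Wt_symm G x ε t j k)]
  exact aux_row_sum G x ε t hP k

lemma aux_Wt_le_one (t : ℕ) (hP : (Gt G x ε t).edgeSet.Nonempty) (j k : Fin n) :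
    Wt G x ε t j k ≤ 1 := by
  have h := Finset.single_le_sum (f := fun k => Wt G x ε t j k)
    (fun l _ => aux_Wt_nonneg G x ε t j l) (Finset.mem_univ k)
  rw [aux_row_sum G x ε t hP j] at h
  exact h

lemma aux_Wt_nb (t : ℕ) {j k : Fin n} (hk : k ∈ Nb G x ε t j) :
    Wt G x ε t j k = 1/(Ecard G x ε t : ℝ) := by
  have hne : k ≠ j := by
    intro hc; subst hc; exact aux_not_mem_Nb_self G x ε t k hk
  unfold Wt
  rw [if_pos hk, if_neg hne, add_zero]

lemma aux_Wt_self (t : ℕ) (i : Fin n)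
    (hd : (Nb G x ε t i).card + 1 ≤ Ecard G x ε t) :
    1/(Ecard G x ε t : ℝ) ≤ Wt G x ε t i i := by
  have hm : 0 < Ecard G x ε t := by omega
  unfold Wt
  rw [if_neg (aux_not_mem_Nb_self G x ε t i), if_pos rfl, zero_add]
  rw [div_le_iff₀ (by exact_mod_cast hm), sub_mul, one_mul,
    div_mul_cancel₀ _ (by exact_mod_cast hm.ne' : (Ecard G x ε t : ℝ) ≠ 0)]
  have : ((Nb G x ε t i).card : ℝ) + 1 ≤ (Ecard G x ε t : ℝ) := by exact_mod_cast hd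
  linarith

lemma aux_update (hupd : Update G x ε) (t : ℕ)
    (hP : (Gt G x ε t).edgeSet.Nonempty) (j : Fin n) :
    x (t+1) j = ∑ k, Wt G x ε t j k * x t k := by
  have h := hupd t j
  rw [if_pos hP] at h
  unfold Wt
  rw [Finset.sum_congr rfl (fun k _ => add_mul _ _ (x t k)), Finset.sum_add_distrib]
  have h1 : ∑ k, (if k ∈ Nb G x ε t j then 1/(Ecard G x ε t : ℝ) else 0) * x t k
      = 1/(Ecard G x ε t : ℝ) * ∑ k ∈ Nb G x ε t j, x t k := by
    rw [Finset.mul_sum]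
    simp [ite_mul, Finset.sum_ite_mem, Finset.univ_inter]
  have h2 : ∑ k, (if k = j then 1 - ((Nb G x ε t j).card : ℝ)/(Ecard G x ε t : ℝ) else 0) * x t k
      = (1 - ((Nb G x ε t j).card : ℝ)/(Ecard G x ε t : ℝ)) * x t j := by
    simp [ite_mul, Finset.sum_ite_eq']
  rw [h1, h2, h]
  ring

lemma aux_update_no (hupd : Update G x ε) (t : ℕ)
    (hP : ¬ (Gt G x ε t).edgeSet.Nonempty) (j : Fin n) :
    x (t+1) j = x t j := by
  have h := hupd t j
  rw [if_neg hP] at h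
  rw [h]
  ring

lemma aux_nonneg (hx0 : ∀ i, 0 ≤ x 0 i) (hupd : Update G x ε) :
    ∀ t j, 0 ≤ x t j := by
  intro t
  induction t with
  | zero => exact hx0
  | succ t ih =>
    intro j
    by_cases hP : (Gt G x ε t).edgeSet.Nonempty
    · rw [aux_update G x ε hupd t hP j]
      exact Finset.sum_nonneg fun k _ => mul_nonneg (aux_Wt_nonneg G x ε t j k) (ih k)
    · rw [aux_update_no G x ε hupd t hP j]; exact ih j

lemma aux_sum_conserved (hupd : Update G x ε) :
    ∀ t, ∑ j, x t j = ∑ j, x 0 j := by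
  intro t
  induction t with
  | zero => rfl
  | succ t ih =>
    rw [← ih]
    by_cases hP : (Gt G x ε t).edgeSet.Nonempty
    · rw [Finset.sum_congr rfl (fun j _ => aux_update G x ε hupd t hP j),
        Finset.sum_comm]
      apply Finset.sum_congr rfl
      intro k _
      rw [← Finset.sum_mul, aux_col_sum G x ε t hP k, one_mul]
    · exact Finset.sum_congr rfl (fun j _ => aux_update_no G x ε hupd t hP j)

lemma aux_NN_anti (hupd : Update G x ε) (t : ℕ) :
    ∑ j, (x (t+1) j)^2 ≤ ∑ j, (x t j)^2 := by
  by_cases hP : (Gt G x ε t).edgeSet.Nonempty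
  · rw [Finset.sum_congr rfl (fun j _ => by rw [aux_update G x ε hupd t hP j])]
    calc ∑ j, (∑ k, Wt G x ε t j k * x t k)^2
        ≤ ∑ j, ∑ k, Wt G x ε t j k * (x t k)^2 :=
          Finset.sum_le_sum fun j _ => aux_jensen_sq (x t) (Wt G x ε t j)
            (aux_Wt_nonneg G x ε t j) (aux_row_sum G x ε t hP j)
      _ = ∑ k, (∑ j, Wt G x ε t j k) * (x t k)^2 := by
          rw [Finset.sum_comm]
          exact Finset.sum_congr rfl fun k _ => (Finset.sum_mul _ _ _).symm
      _ = ∑ k, (x t k)^2 := by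
          apply Finset.sum_congr rfl
          intro k _
          rw [aux_col_sum G x ε t hP k, one_mul]
  · rw [Finset.sum_congr rfl (fun j _ => by rw [aux_update_no G x ε hupd t hP j])]

lemma aux_key_step (hupd : Update G x ε) (t : ℕ) (i : Fin n)
    (hP : (Gt G x ε t).edgeSet.Nonempty)
    (hd : (Nb G x ε t i).card + 1 ≤ Ecard G x ε t)
    {k : Fin n} (hk : k ∈ Nb G x ε t i) :
    (x t i - x t k)^2 ≤ ((Ecard G x ε t : ℝ))^2 *
      ((∑ j, (x t j)^2) - ∑ j, (x (t+1) j)^2) := by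
  have hm : (0:ℝ) < (Ecard G x ε t : ℝ) := by
    exact_mod_cast aux_Ecard_pos G x ε t hP
  have hne : i ≠ k := ((aux_mem_Nb G x ε).mp hk).ne
  set W := Wt G x ε t with hW
  have h1 : ∀ j : Fin n, (∑ l, W j l * x t l)^2 ≤ ∑ l, W j l * (x t l)^2 :=
    fun j => aux_jensen_sq (x t) (W j) (aux_Wt_nonneg G x ε t j)
      (aux_row_sum G x ε t hP j)
  have h2 : (∑ l, W i l * x t l)^2 + W i i * W i k * (x t i - x t k)^2
      ≤ ∑ l, W i l * (x t l)^2 :=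
    aux_jensen_sq_defect (x t) (W i) (aux_Wt_nonneg G x ε t i)
      (aux_row_sum G x ε t hP i) i k hne
  have hup : ∀ j : Fin n, x (t+1) j = ∑ l, W j l * x t l :=
    fun j => aux_update G x ε hupd t hP j
  have hcol : ∑ j, ∑ l, W j l * (x t l)^2 = ∑ l, (x t l)^2 := by
    rw [Finset.sum_comm]
    apply Finset.sum_congr rfl
    intro l _
    rw [← Finset.sum_mul, aux_col_sum G x ε t hP l, one_mul]
  have e1 : ∑ j, (x (t+1) j)^2
      = (∑ j ∈ Finset.univ.erase i, (∑ l, W j l * x t l)^2) + (∑ l, W i l * x t l)^2 := by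
    rw [Finset.sum_erase_add _ _ (Finset.mem_univ i)]
    exact Finset.sum_congr rfl fun j _ => by rw [hup j]
  have e2 : ∑ j, ∑ l, W j l * (x t l)^2
      = (∑ j ∈ Finset.univ.erase i, ∑ l, W j l * (x t l)^2) + ∑ l, W i l * (x t l)^2 := by
    rw [Finset.sum_erase_add _ _ (Finset.mem_univ i)]
  have h3 : ∑ j ∈ Finset.univ.erase i, (∑ l, W j l * x t l)^2
      ≤ ∑ j ∈ Finset.univ.erase i, ∑ l, W j l * (x t l)^2 :=
    Finset.sum_le_sum fun j _ => h1 j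
  have hmain : W i i * W i k * (x t i - x t k)^2
      ≤ (∑ j, (x t j)^2) - ∑ j, (x (t+1) j)^2 := by
    have := hcol
    linarith [h2, h3, e1, e2, hcol]
  have hWik : W i k = 1/(Ecard G x ε t : ℝ) := aux_Wt_nb G x ε t hk
  have hWii : 1/(Ecard G x ε t : ℝ) ≤ W i i := aux_Wt_self G x ε t i hd
  have hD : (1/(Ecard G x ε t : ℝ)) * (1/(Ecard G x ε t : ℝ)) * (x t i - x t k)^2
      ≤ W i i * W i k * (x t i - x t k)^2 := by
    apply mul_le_mul_of_nonneg_right _ (sq_nonneg _)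
    rw [hWik]
    apply mul_le_mul_of_nonneg_right hWii (by positivity)
  calc (x t i - x t k)^2
      = (Ecard G x ε t : ℝ)^2 *
        ((1/(Ecard G x ε t : ℝ)) * (1/(Ecard G x ε t : ℝ)) * (x t i - x t k)^2) := by
        field_simp
    _ ≤ (Ecard G x ε t : ℝ)^2 * (W i i * W i k * (x t i - x t k)^2) :=
        mul_le_mul_of_nonneg_left hD (by positivity)
    _ ≤ (Ecard G x ε t : ℝ)^2 * ((∑ j, (x t j)^2) - ∑ j, (x (t+1) j)^2) :=
        mul_le_mul_of_nonneg_left hmain (by positivity)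

lemma aux_Ecard_le (t : ℕ) : Ecard G x ε t ≤ Fintype.card (Sym2 (Fin n)) := by
  rw [Ecard]
  calc (Gt G x ε t).edgeSet.ncard ≤ (Set.univ : Set (Sym2 (Fin n))).ncard :=
        Set.ncard_le_ncard (Set.subset_univ _) (Set.toFinite _)
    _ = Fintype.card (Sym2 (Fin n)) := by rw [Set.ncard_univ, Nat.card_eq_fintype_card]

lemma aux_NN_diff_tendsto (hupd : Update G x ε) :
    Filter.Tendsto (fun t => (∑ j, (x t j)^2) - ∑ j, (x (t+1) j)^2)
      Filter.atTop (nhds 0) := by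
  have hanti : Antitone (fun t => ∑ j, (x t j)^2) :=
    antitone_nat_of_succ_le (fun t => aux_NN_anti G x ε hupd t)
  have hbdd : BddBelow (Set.range (fun t => ∑ j, (x t j)^2)) := by
    refine ⟨0, ?_⟩
    rintro r ⟨t, rfl⟩
    exact Finset.sum_nonneg fun j _ => sq_nonneg _
  have h1 := tendsto_atTop_ciInf hanti hbdd
  have h2 : Filter.Tendsto (fun t => ∑ j, (x (t+1) j)^2) Filter.atTop
      (nhds (⨅ t, ∑ j, (x t j)^2)) := by
    have := h1.comp (Filter.tendsto_add_atTop_nat 1)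
    exact this
  simpa using h1.sub h2

lemma aux_Wt_ne_zero (t : ℕ) {j k : Fin n} (h : Wt G x ε t j k ≠ 0) :
    k ∈ Nb G x ε t j ∨ k = j := by
  by_contra hc
  push_neg at hc
  apply h
  unfold Wt
  rw [if_neg hc.1, if_neg hc.2, add_zero]

lemma aux_delta_tendsto (hx0 : ∀ i, 0 ≤ x 0 i) (hupd : Update G x ε) (i : Fin n)
    (T : ℕ) (hT : ∀ t, T ≤ t → (Nb G x ε t i).card + 1 ≤ Ecard G x ε t) :
    Filter.Tendsto (fun t => x (t+1) i - x t i) Filter.atTop (nhds 0) := by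
  rw [Metric.tendsto_atTop]
  intro η hη
  set C : ℝ := ((Fintype.card (Sym2 (Fin n)) : ℝ) + 1)^2 with hC
  have hCpos : 0 < C := by positivity
  have hd := aux_NN_diff_tendsto G x ε hupd
  rw [Metric.tendsto_atTop] at hd
  obtain ⟨N1, hN1⟩ := hd ((η/2)^2 / C) (by positivity)
  refine ⟨max N1 T, fun t ht => ?_⟩
  have htN1 : N1 ≤ t := le_trans (le_max_left _ _) ht
  have htT : T ≤ t := le_trans (le_max_right _ _) ht
  by_cases hP : (Gt G x ε t).edgeSet.Nonempty
  · have hclose : ∀ k ∈ Nb G x ε t i, |x t k - x t i| ≤ η/2 := by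
      intro k hk
      have hkey := aux_key_step G x ε hupd t i hP (hT t htT) hk
      have hdiff := hN1 t htN1
      rw [Real.dist_eq, sub_zero] at hdiff
      have hm2 : ((Ecard G x ε t : ℝ))^2 ≤ C := by
        rw [hC]
        have h1 : (Ecard G x ε t : ℝ) ≤ (Fintype.card (Sym2 (Fin n)) : ℝ) + 1 := by
          have h := aux_Ecard_le G x ε t
          have h' : (Ecard G x ε t : ℝ) ≤ (Fintype.card (Sym2 (Fin n)) : ℝ) := by
            exact_mod_cast h
          linarith
        have h0 : (0:ℝ) ≤ (Ecard G x ε t : ℝ) := by positivity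
        nlinarith
      have habs : (∑ j, (x t j)^2) - ∑ j, (x (t+1) j)^2 < (η/2)^2 / C := by
        calc (∑ j, (x t j)^2) - ∑ j, (x (t+1) j)^2
            ≤ |(∑ j, (x t j)^2) - ∑ j, (x (t+1) j)^2| := le_abs_self _
          _ < (η/2)^2 / C := hdiff
      have hsq : (x t i - x t k)^2 < (η/2)^2 := by
        calc (x t i - x t k)^2
            ≤ ((Ecard G x ε t : ℝ))^2 * ((∑ j, (x t j)^2) - ∑ j, (x (t+1) j)^2) := hkey
          _ ≤ C * ((∑ j, (x t j)^2) - ∑ j, (x (t+1) j)^2) := by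
              apply mul_le_mul_of_nonneg_right hm2
              have := aux_NN_anti G x ε hupd t
              linarith
          _ < C * ((η/2)^2 / C) := by
              apply mul_lt_mul_of_pos_left habs hCpos
          _ = (η/2)^2 := by field_simp
      have : |x t i - x t k| < η/2 := by nlinarith [sq_abs (x t i - x t k), abs_nonneg (x t i - x t k)]
      rw [abs_sub_comm] at this
      linarith
    have hupd' := aux_update G x ε hupd t hP i
    have hΔ : x (t+1) i - x t i = ∑ k, Wt G x ε t i k * (x t k - x t i) := by
      rw [hupd']
      have : ∑ k, Wt G x ε t i k * (x t k - x t i)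
          = (∑ k, Wt G x ε t i k * x t k) - (∑ k, Wt G x ε t i k) * x t i := by
        rw [Finset.sum_mul, ← Finset.sum_sub_distrib]
        apply Finset.sum_congr rfl
        intro k _
        ring
      rw [this, aux_row_sum G x ε t hP i, one_mul]
    rw [Real.dist_eq, sub_zero, hΔ]
    calc |∑ k, Wt G x ε t i k * (x t k - x t i)|
        ≤ ∑ k, |Wt G x ε t i k * (x t k - x t i)| := Finset.abs_sum_le_sum_abs _ _
      _ ≤ ∑ k, Wt G x ε t i k * (η/2) := by
          apply Finset.sum_le_sum
          intro k _
          rw [abs_mul, abs_of_nonneg (aux_Wt_nonneg G x ε t i k)]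
          by_cases hW : Wt G x ε t i k = 0
          · rw [hW]; simp
          · apply mul_le_mul_of_nonneg_left _ (aux_Wt_nonneg G x ε t i k)
            rcases aux_Wt_ne_zero G x ε t hW with hmem | heq
            · exact hclose k hmem
            · subst heq; simp; positivity
      _ = η/2 := by rw [← Finset.sum_mul, aux_row_sum G x ε t hP i, one_mul]
      _ < η := by linarith
  · rw [aux_update_no G x ε hupd t hP i]
    simp [hη]

lemma aux_psi_mono (hx0 : ∀ i, 0 ≤ x 0 i) (hupd : Update G x ε) {k : ℕ} (hk : k ≤ n) :
    Monotone (fun t => sumMin (x t) k) := by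
  apply monotone_nat_of_le_succ
  intro t
  by_cases hP : (Gt G x ε t).edgeSet.Nonempty
  · obtain ⟨S, hS, hval⟩ := sumMin_exists (x (t+1)) hk
    simp only [hval]
    have hrw : ∑ j ∈ S, x (t+1) j = ∑ l, (∑ j ∈ S, Wt G x ε t j l) * x t l := by
      rw [Finset.sum_congr rfl (fun j _ => aux_update G x ε hupd t hP j),
        Finset.sum_comm]
      exact Finset.sum_congr rfl fun l _ => (Finset.sum_mul _ _ _).symm
    rw [hrw]
    apply sumMin_le_weighted (x t) (aux_nonneg G x ε hx0 hupd t) hk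
    · intro l
      exact Finset.sum_nonneg fun j _ => aux_Wt_nonneg G x ε t j l
    · intro l
      calc ∑ j ∈ S, Wt G x ε t j l ≤ ∑ j, Wt G x ε t j l :=
            Finset.sum_le_sum_of_subset_of_nonneg (Finset.subset_univ _)
              (fun j _ _ => aux_Wt_nonneg G x ε t j l)
        _ = 1 := aux_col_sum G x ε t hP l
    · rw [Finset.sum_comm]
      rw [Finset.sum_congr rfl (fun j (_ : j ∈ S) => aux_row_sum G x ε t hP j)]
      simp [hS]
  · have hxx : x (t+1) = x t := funext (aux_update_no G x ε hupd t hP)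
    rw [hxx]

lemma aux_psi_tendsto (hx0 : ∀ i, 0 ≤ x 0 i) (hupd : Update G x ε) {k : ℕ} (hk : k ≤ n) :
    ∃ L, Filter.Tendsto (fun t => sumMin (x t) k) Filter.atTop (nhds L) := by
  refine ⟨_, tendsto_atTop_ciSup (aux_psi_mono G x ε hx0 hupd hk) ⟨∑ j, x 0 j, ?_⟩⟩
  rintro r ⟨t, rfl⟩
  obtain ⟨S, hS, hval⟩ := sumMin_exists (x t) hk
  simp only [hval]
  calc ∑ j ∈ S, x t j ≤ ∑ j, x t j :=
        Finset.sum_le_sum_of_subset_of_nonneg (Finset.subset_univ _)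
          (fun j _ _ => aux_nonneg G x ε hx0 hupd t j)
    _ = ∑ j, x 0 j := aux_sum_conserved G x ε hupd t

lemma aux_rank (t : ℕ) (i : Fin n) :
    ∃ k, k < n ∧ x t i = sumMin (x t) (k+1) - sumMin (x t) k := by
  set R := Finset.univ.filter
    (fun j => x t j < x t i ∨ (x t j = x t i ∧ j < i)) with hR
  have hiR : i ∉ R := by simp [hR]
  have hsub : R ⊆ Finset.univ.erase i := by
    intro j hj
    exact Finset.mem_erase.mpr ⟨fun hc => hiR (hc ▸ hj), Finset.mem_univ j⟩
  have hkn : R.card < n := by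
    calc R.card ≤ (Finset.univ.erase i).card := Finset.card_le_card hsub
      _ = n - 1 := by rw [Finset.card_erase_of_mem (Finset.mem_univ i)]; simp
      _ < n := by
          have : 0 < n := Fin.pos i
          omega
  have hsep1 : ∀ j ∈ R, x t j ≤ x t i := by
    intro j hj
    rw [hR, Finset.mem_filter] at hj
    rcases hj.2 with h | h
    · exact le_of_lt h
    · exact le_of_eq h.1
  have hsep2 : ∀ j ∉ R, x t i ≤ x t j := by
    intro j hj
    rw [hR, Finset.mem_filter] at hj
    push_neg at hj
    have := hj (Finset.mem_univ j)
    exact this.1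
  have h1 : sumMin (x t) R.card = ∑ j ∈ R, x t j :=
    sumMin_eq_of_sep (x t) (le_of_lt hkn) R (x t i) rfl hsep1 hsep2
  have hsep1' : ∀ j ∈ insert i R, x t j ≤ x t i := by
    intro j hj
    rcases Finset.mem_insert.mp hj with h | h
    · rw [h]
    · exact hsep1 j h
  have hsep2' : ∀ j ∉ insert i R, x t i ≤ x t j := by
    intro j hj
    exact hsep2 j (fun hc => hj (Finset.mem_insert_of_mem hc))
  have h2 : sumMin (x t) (R.card + 1) = ∑ j ∈ insert i R, x t j :=
    sumMin_eq_of_sep (x t) (by omega) (insert i R) (x t i)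
      (by rw [Finset.card_insert_of_notMem hiR]) hsep1' hsep2'
  refine ⟨R.card, hkn, ?_⟩
  rw [h1, h2, Finset.sum_insert hiR]
  ring

end Aux

/-- Lemma 4: `x_i(t)` converges if `|E_t| − |N_i(t)| ≥ 1` after some time. -/
theorem asymptotic_stability {n : ℕ} (G : SimpleGraph (Fin n)) (x : ℕ → Fin n → ℝ)
    (ε : ℝ) (hε : 0 < ε) (hx0 : ∀ i, 0 ≤ x 0 i) (hupd : Update G x ε) (i : Fin n)
    (h : ∃ T : ℕ, ∀ t, T ≤ t → (Nb G x ε t i).card + 1 ≤ Ecard G x ε t) :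
    ∃ L : ℝ, Filter.Tendsto (fun t => x t i) Filter.atTop (nhds L) := by
  obtain ⟨T, hT⟩ := h
  have hψ : ∀ k : ℕ, k ≤ n →
      ∃ L, Filter.Tendsto (fun t => sumMin (x t) k) Filter.atTop (nhds L) :=
    fun k hk => aux_psi_tendsto G x ε hx0 hupd hk
  choose! Ψ hΨ using hψ
  set v : ℕ → ℝ := fun k => Ψ (k+1) - Ψ k with hv
  have hvt : ∀ k, k < n → Filter.Tendsto
      (fun t => sumMin (x t) (k+1) - sumMin (x t) k) Filter.atTop (nhds (v k)) :=
    fun k hk => (hΨ (k+1) hk).sub (hΨ k (le_of_lt hk))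
  set Vs : Finset ℝ := (Finset.range n).image v with hVs
  set D : Finset ℝ :=
    ((Vs ×ˢ Vs).filter (fun p => p.1 ≠ p.2)).image (fun p => |p.1 - p.2|) with hD
  have hDpos : ∀ r ∈ D, 0 < r := by
    intro r hr
    rw [hD, Finset.mem_image] at hr
    obtain ⟨p, hp, rfl⟩ := hr
    rw [Finset.mem_filter] at hp
    exact abs_pos.mpr (sub_ne_zero.mpr hp.2)
  have hcauchy : CauchySeq (fun t => x t i) := by
    rw [Metric.cauchySeq_iff]
    intro δ hδ
    set g : ℝ := if hDne : D.Nonempty then min δ (D.min' hDne) else δ with hg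
    have hgpos : 0 < g := by
      rw [hg]
      split
      · rename_i hDne
        exact lt_min hδ (hDpos _ (D.min'_mem hDne))
      · exact hδ
    have hgδ : g ≤ δ := by
      rw [hg]
      split
      · exact min_le_left _ _
      · exact le_refl δ
    have hgap : ∀ a b, a ∈ Vs → b ∈ Vs → a ≠ b → g ≤ |a - b| := by
      intro a b ha hb hab
      have hmem : |a - b| ∈ D := by
        rw [hD, Finset.mem_image]
        exact ⟨(a, b), Finset.mem_filter.mpr ⟨Finset.mem_product.mpr ⟨ha, hb⟩, hab⟩, rfl⟩
      have hDne : D.Nonempty := ⟨_, hmem⟩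
      rw [hg, dif_pos hDne]
      exact le_trans (min_le_right _ _) (D.min'_le _ hmem)
    have E1 : ∀ᶠ t in Filter.atTop, ∀ k ∈ Finset.range n,
        |sumMin (x t) (k+1) - sumMin (x t) k - v k| < g/3 := by
      rw [Finset.eventually_all]
      intro k hk
      have := Metric.tendsto_atTop.mp (hvt k (Finset.mem_range.mp hk)) (g/3)
        (by positivity)
      obtain ⟨N, hN⟩ := this
      rw [Filter.eventually_atTop]
      refine ⟨N, fun t ht => ?_⟩
      have := hN t ht
      rwa [Real.dist_eq] at this
    have E2 : ∀ᶠ t in Filter.atTop, |x (t+1) i - x t i| < g/3 := by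
      have := Metric.tendsto_atTop.mp (aux_delta_tendsto G x ε hx0 hupd i T hT)
        (g/3) (by positivity)
      obtain ⟨N, hN⟩ := this
      rw [Filter.eventually_atTop]
      refine ⟨N, fun t ht => ?_⟩
      have := hN t ht
      rwa [Real.dist_eq, sub_zero] at this
    obtain ⟨N, hN⟩ := Filter.eventually_atTop.mp (E1.and E2)
    have hclu : ∀ t, N ≤ t → ∃ k, k < n ∧ |x t i - v k| < g/3 := by
      intro t ht
      obtain ⟨k, hk, hxk⟩ := aux_rank x t i
      refine ⟨k, hk, ?_⟩
      rw [hxk]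
      exact (hN t ht).1 k (Finset.mem_range.mpr hk)
    have hstep : ∀ t, N ≤ t → ∀ k k', k < n → k' < n →
        |x t i - v k| < g/3 → |x (t+1) i - v k'| < g/3 → v k = v k' := by
      intro t ht k k' hk hk' hxk hxk'
      by_contra hne
      have h1 : g ≤ |v k - v k'| := hgap _ _
        (Finset.mem_image.mpr ⟨k, Finset.mem_range.mpr hk, rfl⟩)
        (Finset.mem_image.mpr ⟨k', Finset.mem_range.mpr hk', rfl⟩) hne
      have h2 := (hN t ht).2
      have hkey : v k - v k' = -(x t i - v k) + -(x (t+1) i - x t i)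
          + (x (t+1) i - v k') := by ring
      have htri : |v k - v k'| ≤ |x t i - v k| + |x (t+1) i - x t i|
          + |x (t+1) i - v k'| := by
        rw [hkey]
        calc |(-(x t i - v k) + -(x (t+1) i - x t i)) + (x (t+1) i - v k')|
            ≤ |(-(x t i - v k) + -(x (t+1) i - x t i))| + |x (t+1) i - v k'| :=
              abs_add_le _ _
          _ ≤ |(-(x t i - v k))| + |(-(x (t+1) i - x t i))| + |x (t+1) i - v k'| := by
              linarith [abs_add_le (-(x t i - v k)) (-(x (t+1) i - x t i))]
          _ = |x t i - v k| + |x (t+1) i - x t i| + |x (t+1) i - v k'| := by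
              rw [abs_neg, abs_neg]
      linarith
    obtain ⟨k0, hk0n, hk0x⟩ := hclu N le_rfl
    have hconst : ∀ t, N ≤ t → ∃ k, k < n ∧ |x t i - v k| < g/3 ∧ v k = v k0 := by
      intro t ht
      induction t, ht using Nat.le_induction with
      | base => exact ⟨k0, hk0n, hk0x, rfl⟩
      | succ t ht ih =>
        obtain ⟨k, hk, hxk, hvk⟩ := ih
        obtain ⟨k', hk', hxk'⟩ := hclu (t+1) (by omega)
        exact ⟨k', hk', hxk', by
          rw [← hstep t ht k k' hk hk' hxk hxk']
          exact hvk⟩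
    refine ⟨N, fun s hs t ht => ?_⟩
    obtain ⟨ks, _, hks, hvs⟩ := hconst s hs
    obtain ⟨kt, _, hkt, hvt'⟩ := hconst t ht
    have hvv : v ks = v kt := hvs.trans hvt'.symm
    rw [Real.dist_eq]
    calc |x s i - x t i| ≤ |x s i - v ks| + |v ks - x t i| := abs_sub_le _ _ _
      _ = |x s i - v ks| + |x t i - v kt| := by rw [hvv, abs_sub_comm (v kt) (x t i)]
      _ < g/3 + g/3 := add_lt_add hks hkt
      _ ≤ δ := by linarith
  exact cauchySeq_tendsto_of_complete hcauchy
end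

section
/- If some connected component H of the graph G_t is δ-nontrivial (i.e., there exist vertices i, j of H with |x_i(t) − x_j(t)| > δ), then ∑_{i ∈ V(H)} (x_i(t) − x_i(t+1))² > 2δ² / (|V(H)|⁶·|E_t|²). -/
open Finset
open scoped Classical

/-- With a nonempty edge set, the update moves each vertex by the averaged disagreement. -/
lemma update_delta {n : ℕ} (G : SimpleGraph (Fin n)) (x : ℕ → Fin n → ℝ) (ε : ℝ)
    (hupd : Update G x ε) (t : ℕ) (hE : (Gt G x ε t).edgeSet.Nonempty) (i : Fin n) :
    x (t + 1) i - x t i =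
      (∑ j ∈ Nb G x ε t i, (x t j - x t i)) / (Ecard G x ε t : ℝ) := by
  have h := hupd t i
  rw [if_pos hE] at h
  rw [h, Finset.sum_sub_distrib, Finset.sum_const, nsmul_eq_mul]
  ring

/-- From a walk whose endpoints straddle a property, extract a crossing edge. -/
lemma exists_cross {V : Type*} (G : SimpleGraph V) (P : V → Prop) :
    ∀ {u v : V}, G.Walk u v → P u → ¬ P v → ∃ a b, G.Adj a b ∧ P a ∧ ¬ P b := by
  intro u v w
  induction w with
  | nil => exact fun h h' => absurd h h'
  | @cons a b c h p ih =>
    intro ha hc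
    by_cases hb : P b
    · exact ih hb hc
    · exact ⟨a, b, h, ha, hb⟩

/-- Pigeonhole gap lemma: a finset of reals with large spread has a gap of size `g`. -/
lemma exists_gap {n : ℕ} (s : Finset (Fin n)) (y : Fin n → ℝ) (g : ℝ) (hg : 0 < g)
    (hspread : ∃ i ∈ s, ∃ j ∈ s, g * s.card < y i - y j) :
    ∃ c : ℝ, (∃ v ∈ s, c + g < y v) ∧ (∃ v ∈ s, y v ≤ c) ∧
      ∀ v ∈ s, y v ≤ c ∨ c + g < y v := by
  obtain ⟨i, hi, j, hj, hij⟩ := hspread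
  obtain ⟨vm, hvm, hmin⟩ := s.exists_min_image y ⟨i, hi⟩
  set N := s.card with hN
  by_contra hcon
  push_neg at hcon
  have htop : ∀ k : ℕ, k < N → ∃ v ∈ s, y vm + k * g + g < y v := by
    intro k hk
    refine ⟨i, hi, ?_⟩
    have h1 : y vm ≤ y j := hmin j hj
    have h2 : (k : ℝ) + 1 ≤ (N : ℝ) := by exact_mod_cast hk
    nlinarith [mul_le_mul_of_nonneg_left h2 hg.le]
  have hw : ∀ k : ℕ, ∃ v, k < N →
      v ∈ s ∧ y vm + k * g < y v ∧ y v ≤ y vm + k * g + g := by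
    intro k
    by_cases hk : k < N
    · obtain ⟨v, hv, h1, h2⟩ := hcon (y vm + k * g) (htop k hk)
        ⟨vm, hvm, by nlinarith [Nat.cast_nonneg (α := ℝ) k]⟩
      exact ⟨v, fun _ => ⟨hv, h1, h2⟩⟩
    · exact ⟨vm, fun h => absurd h hk⟩
  choose f hf using hw
  have hinj : ∀ k1 k2, k1 < N → k2 < N → k1 < k2 → f k1 ≠ f k2 := by
    intro k1 k2 h1 h2 hlt heq
    obtain ⟨_, hl1, hu1⟩ := hf k1 h1
    obtain ⟨_, hl2, _⟩ := hf k2 h2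
    rw [heq] at hu1
    have hc : (k1 : ℝ) + 1 ≤ (k2 : ℝ) := by exact_mod_cast hlt
    nlinarith [mul_le_mul_of_nonneg_right hc hg.le]
  have hmaps : ∀ k ∈ Finset.range N, f k ∈ s.erase vm := by
    intro k hk
    rw [Finset.mem_range] at hk
    obtain ⟨hm, hl, _⟩ := hf k hk
    refine Finset.mem_erase.mpr ⟨?_, hm⟩
    intro h
    rw [h] at hl
    nlinarith [Nat.cast_nonneg (α := ℝ) k]
  have hcard := Finset.card_le_card_of_injOn f hmaps ?_
  · rw [Finset.card_range, Finset.card_erase_of_mem hvm] at hcard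
    have hNpos : 0 < N := Finset.card_pos.mpr ⟨i, hi⟩
    omega
  · intro k1 hk1 k2 hk2 heq
    simp only [Finset.coe_range, Set.mem_Iio] at hk1 hk2
    by_contra hne
    rcases lt_or_gt_of_ne hne with h | h
    · exact hinj k1 k2 hk1 hk2 h heq
    · exact hinj k2 k1 hk2 hk1 h heq.symm

set_option maxHeartbeats 2000000 in
/-- Lemma 8 (first part): a δ-nontrivial component `H` of `G_t` forces
`∑_{i ∈ V(H)} (x_i(t) − x_i(t+1))² > 2δ² / (|V(H)|⁶ |E_t|²)`. -/
theorem delta_nontrivial_component {n : ℕ} (G : SimpleGraph (Fin n)) (x : ℕ → Fin n → ℝ)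
    (ε : ℝ) (hε : 0 < ε) (hx0 : ∀ i, 0 ≤ x 0 i) (hupd : Update G x ε)
    (δ : ℝ) (hδ : 0 < δ) (t : ℕ) (H : (Gt G x ε t).ConnectedComponent)
    (hnontriv : ∃ i ∈ H.supp, ∃ j ∈ H.supp, δ < |x t i - x t j|) :
    ∑ i ∈ H.supp.toFinset, (x t i - x (t + 1) i) ^ 2 >
      2 * δ ^ 2 / ((H.supp.ncard : ℝ) ^ 6 * (Ecard G x ε t : ℝ) ^ 2) := by
  classical
  obtain ⟨i0, hi0, j0, hj0, hij0⟩ := hnontriv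
  set s : Finset (Fin n) := H.supp.toFinset with hs
  have hmem : ∀ v : Fin n, v ∈ s ↔ v ∈ H.supp := fun v => Set.mem_toFinset
  obtain ⟨i1, hi1, j1, hj1, hij⟩ : ∃ i ∈ s, ∃ j ∈ s, δ < x t i - x t j := by
    rcases lt_abs.mp hij0 with h | h
    · exact ⟨i0, (hmem i0).mpr hi0, j0, (hmem j0).mpr hj0, h⟩
    · exact ⟨j0, (hmem j0).mpr hj0, i0, (hmem i0).mpr hi0, by linarith⟩
  have hne : i1 ≠ j1 := by
    rintro rfl
    rw [sub_self] at hij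
    linarith
  have hN2 : 2 ≤ s.card := Finset.one_lt_card.mpr ⟨i1, hi1, j1, hj1, hne⟩
  have hNcard : H.supp.ncard = s.card := Set.ncard_eq_toFinset_card' _
  set N := s.card with hNdef
  have hNr : (2 : ℝ) ≤ (N : ℝ) := by exact_mod_cast hN2
  have hNpos : (0 : ℝ) < (N : ℝ) := by linarith
  set g : ℝ := δ / N with hgdef
  have hg : 0 < g := div_pos hδ hNpos
  have hgN : g * (N : ℝ) = δ := by
    rw [hgdef]; field_simp
  obtain ⟨c, ⟨va, hva, hvagap⟩, ⟨vb, hvb, hvble⟩, hgap⟩ :=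
    exists_gap s (x t) g hg ⟨i1, hi1, j1, hj1, by rw [hgN]; exact hij⟩
  set A : Finset (Fin n) := s.filter (fun v => c < x t v) with hA
  have hvaA : va ∈ A := Finset.mem_filter.mpr ⟨hva, by linarith⟩
  have hvbA : vb ∉ A := fun h => by
    have := (Finset.mem_filter.mp h).2; linarith
  have hAsub : A ⊆ s := Finset.filter_subset _ _
  have hAbig : ∀ v ∈ A, c + g < x t v := by
    intro v hv
    rcases hgap v (hAsub hv) with h | h
    · exact absurd (Finset.mem_filter.mp hv).2 (not_lt.mpr h)
    · exact h
  have hnotA : ∀ v ∈ s, v ∉ A → x t v ≤ c := by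
    intro v hv hvA
    by_contra h
    exact hvA (Finset.mem_filter.mpr ⟨hv, lt_of_not_ge h⟩)
  have hadj_supp : ∀ a b : Fin n, (Gt G x ε t).Adj a b → a ∈ s → b ∈ s := by
    intro a b hab ha
    rw [hmem] at ha ⊢
    rw [SimpleGraph.ConnectedComponent.mem_supp_iff] at ha ⊢
    rw [← ha]
    exact SimpleGraph.ConnectedComponent.sound hab.symm.reachable
  have hreach : (Gt G x ε t).Reachable va vb := by
    have h1 := (SimpleGraph.ConnectedComponent.mem_supp_iff _ _).mp ((hmem va).mp hva)
    have h2 := (SimpleGraph.ConnectedComponent.mem_supp_iff _ _).mp ((hmem vb).mp hvb)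
    exact SimpleGraph.ConnectedComponent.exact (h1.trans h2.symm)
  obtain ⟨a, b, hab, haA, hbA⟩ :=
    exists_cross (Gt G x ε t) (fun v => v ∈ A) hreach.some hvaA hvbA
  have hbs : b ∈ s := hadj_supp a b hab (hAsub haA)
  have hE : (Gt G x ε t).edgeSet.Nonempty := ⟨s(a, b), (SimpleGraph.mem_edgeSet _).mpr hab⟩
  have hEpos : 0 < Ecard G x ε t := by
    rw [Ecard, Set.ncard_pos (Set.toFinite _)]
    exact hE
  have hEr1 : (1 : ℝ) ≤ (Ecard G x ε t : ℝ) := by exact_mod_cast hEpos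
  set D : Fin n → ℝ := fun i => ∑ j ∈ Nb G x ε t i, (x t j - x t i) with hD
  have hupd' : ∀ i, x t i - x (t + 1) i = -(D i / (Ecard G x ε t : ℝ)) := by
    intro i
    have h := update_delta G x ε hupd t hE i
    simp only [hD]
    linarith
  have hsplit : ∀ i, D i =
      (∑ j ∈ (Nb G x ε t i).filter (fun j => j ∈ A), (x t j - x t i)) +
      (∑ j ∈ (Nb G x ε t i).filter (fun j => j ∉ A), (x t j - x t i)) := by
    intro i
    simp only [hD]
    exact (Finset.sum_filter_add_sum_filter_not _ _ _).symm
  have hNbfilter : ∀ i : Fin n, (Nb G x ε t i).filter (fun j => j ∈ A)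
      = A.filter (fun j => (Gt G x ε t).Adj i j) := by
    intro i
    ext j
    simp only [Nb, Finset.mem_filter, Finset.mem_univ, true_and]
    tauto
  have hT : (∑ i ∈ A, ∑ j ∈ (Nb G x ε t i).filter (fun j => j ∈ A), (x t j - x t i)) = 0 := by
    have hrw : ∀ i ∈ A, ∑ j ∈ (Nb G x ε t i).filter (fun j => j ∈ A), (x t j - x t i)
        = ∑ j ∈ A, if (Gt G x ε t).Adj i j then x t j - x t i else 0 := by
      intro i _
      rw [hNbfilter i, Finset.sum_filter]
    rw [Finset.sum_congr rfl hrw]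
    have hanti : ∀ i j : Fin n, (if (Gt G x ε t).Adj i j then x t j - x t i else 0)
        = -(if (Gt G x ε t).Adj j i then x t i - x t j else 0) := by
      intro i j
      by_cases h : (Gt G x ε t).Adj i j
      · rw [if_pos h, if_pos h.symm]; ring
      · rw [if_neg h, if_neg (fun h' => h h'.symm)]; ring
    set T := ∑ i ∈ A, ∑ j ∈ A, if (Gt G x ε t).Adj i j then x t j - x t i else 0 with hTdef
    have hTT : T = -T := by
      calc T = ∑ j ∈ A, ∑ i ∈ A, (if (Gt G x ε t).Adj i j then x t j - x t i else 0) :=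
            Finset.sum_comm
        _ = ∑ j ∈ A, ∑ i ∈ A, -(if (Gt G x ε t).Adj j i then x t i - x t j else 0) :=
            Finset.sum_congr rfl fun j _ => Finset.sum_congr rfl fun i _ => hanti i j
        _ = -T := by
            simp only [Finset.sum_neg_distrib, hTdef]
    linarith
  have hQterm : ∀ i ∈ A, ∀ j ∈ (Nb G x ε t i).filter (fun j => j ∉ A),
      x t j - x t i ≤ -g := by
    intro i hi j hj
    rw [Finset.mem_filter] at hj
    have hadj : (Gt G x ε t).Adj i j := by
      have := hj.1
      simpa [Nb] using this
    have hjs : j ∈ s := hadj_supp i j hadj (hAsub hi)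
    have h1 : x t j ≤ c := hnotA j hjs hj.2
    have h2 : c + g < x t i := hAbig i hi
    linarith
  have hQcard : 1 ≤ ∑ i ∈ A, ((Nb G x ε t i).filter (fun j => j ∉ A)).card := by
    have hbmem : b ∈ (Nb G x ε t a).filter (fun j => j ∉ A) := by
      rw [Finset.mem_filter]
      exact ⟨by simp [Nb, hab], hbA⟩
    calc 1 ≤ ((Nb G x ε t a).filter (fun j => j ∉ A)).card :=
          Finset.card_pos.mpr ⟨b, hbmem⟩
      _ ≤ _ := Finset.single_le_sum
          (f := fun i => ((Nb G x ε t i).filter (fun j => j ∉ A)).card)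
          (fun i _ => Nat.zero_le _) haA
  have hQ : (∑ i ∈ A, ∑ j ∈ (Nb G x ε t i).filter (fun j => j ∉ A), (x t j - x t i))
      ≤ -g := by
    have h1 : ∀ i ∈ A, ∑ j ∈ (Nb G x ε t i).filter (fun j => j ∉ A), (x t j - x t i)
        ≤ (((Nb G x ε t i).filter (fun j => j ∉ A)).card : ℝ) * (-g) := by
      intro i hi
      calc ∑ j ∈ (Nb G x ε t i).filter (fun j => j ∉ A), (x t j - x t i)
          ≤ ∑ _j ∈ (Nb G x ε t i).filter (fun j => j ∉ A), (-g) :=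
            Finset.sum_le_sum (hQterm i hi)
        _ = _ := by rw [Finset.sum_const, nsmul_eq_mul]
    calc (∑ i ∈ A, ∑ j ∈ (Nb G x ε t i).filter (fun j => j ∉ A), (x t j - x t i))
        ≤ ∑ i ∈ A, (((Nb G x ε t i).filter (fun j => j ∉ A)).card : ℝ) * (-g) :=
          Finset.sum_le_sum h1
      _ = ((∑ i ∈ A, ((Nb G x ε t i).filter (fun j => j ∉ A)).card : ℕ) : ℝ) * (-g) := by
          rw [← Finset.sum_mul]
          norm_cast
      _ ≤ 1 * (-g) :=
          mul_le_mul_of_nonpos_right (by exact_mod_cast hQcard) (by linarith)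
      _ = -g := one_mul _
  have hDA : (∑ i ∈ A, D i) ≤ -g := by
    have heq : (∑ i ∈ A, D i)
        = (∑ i ∈ A, ∑ j ∈ (Nb G x ε t i).filter (fun j => j ∈ A), (x t j - x t i))
          + (∑ i ∈ A, ∑ j ∈ (Nb G x ε t i).filter (fun j => j ∉ A), (x t j - x t i)) := by
      rw [← Finset.sum_add_distrib]
      exact Finset.sum_congr rfl fun i _ => hsplit i
    rw [heq, hT, zero_add]
    exact hQ
  set S2 : ℝ := ∑ i ∈ A, (D i) ^ 2 with hS2
  have hS2nonneg : 0 ≤ S2 := Finset.sum_nonneg fun i _ => sq_nonneg _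
  have hCS : (∑ i ∈ A, D i) ^ 2 ≤ (A.card : ℝ) * S2 := sq_sum_le_card_mul_sum_sq
  have hg2 : g ^ 2 ≤ (∑ i ∈ A, D i) ^ 2 := by nlinarith
  have hAcard : (A.card : ℝ) ≤ (N : ℝ) := by exact_mod_cast Finset.card_le_card hAsub
  have hS2big : δ ^ 2 ≤ (N : ℝ) ^ 3 * S2 := by
    have h1 : g ^ 2 ≤ (N : ℝ) * S2 :=
      le_trans hg2 (le_trans hCS (mul_le_mul_of_nonneg_right hAcard hS2nonneg))
    have h2 : g ^ 2 = δ ^ 2 / (N : ℝ) ^ 2 := by rw [hgdef, div_pow]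
    rw [h2, div_le_iff₀ (by positivity)] at h1
    calc δ ^ 2 ≤ (N : ℝ) * S2 * (N : ℝ) ^ 2 := h1
      _ = (N : ℝ) ^ 3 * S2 := by ring
  have hLHS : S2 / (Ecard G x ε t : ℝ) ^ 2 ≤ ∑ i ∈ s, (x t i - x (t + 1) i) ^ 2 := by
    have h1 : ∀ i ∈ A, (x t i - x (t + 1) i) ^ 2 = (D i) ^ 2 / (Ecard G x ε t : ℝ) ^ 2 := by
      intro i _
      rw [hupd' i, neg_sq, div_pow]
    calc S2 / (Ecard G x ε t : ℝ) ^ 2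
        = ∑ i ∈ A, (D i) ^ 2 / (Ecard G x ε t : ℝ) ^ 2 := by rw [hS2, Finset.sum_div]
      _ = ∑ i ∈ A, (x t i - x (t + 1) i) ^ 2 :=
          Finset.sum_congr rfl fun i hi => (h1 i hi).symm
      _ ≤ ∑ i ∈ s, (x t i - x (t + 1) i) ^ 2 :=
          Finset.sum_le_sum_of_subset_of_nonneg hAsub (fun i _ _ => sq_nonneg _)
  rw [hNcard]
  have hfinal : 2 * δ ^ 2 / ((N : ℝ) ^ 6 * (Ecard G x ε t : ℝ) ^ 2)
      < S2 / (Ecard G x ε t : ℝ) ^ 2 := by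
    rw [div_lt_div_iff₀ (by positivity) (by positivity)]
    have h8 : (8 : ℝ) ≤ (N : ℝ) ^ 3 := by
      calc (8 : ℝ) = 2 ^ 3 := by norm_num
        _ ≤ (N : ℝ) ^ 3 := pow_le_pow_left₀ (by norm_num) hNr 3
    have hN3 : (0 : ℝ) ≤ (N : ℝ) ^ 3 := by positivity
    have e1 : δ ^ 2 * (N : ℝ) ^ 3 ≤ ((N : ℝ) ^ 3 * S2) * (N : ℝ) ^ 3 :=
      mul_le_mul_of_nonneg_right hS2big hN3
    have e2 : δ ^ 2 * 8 ≤ δ ^ 2 * (N : ℝ) ^ 3 :=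
      mul_le_mul_of_nonneg_left h8 (sq_nonneg δ)
    have hd2 : (0 : ℝ) < δ ^ 2 := by positivity
    have e3 : 2 * δ ^ 2 < (N : ℝ) ^ 3 * S2 * (N : ℝ) ^ 3 := by nlinarith
    have hEsq : (0 : ℝ) < (Ecard G x ε t : ℝ) ^ 2 := by positivity
    calc 2 * δ ^ 2 * (Ecard G x ε t : ℝ) ^ 2
        < ((N : ℝ) ^ 3 * S2 * (N : ℝ) ^ 3) * (Ecard G x ε t : ℝ) ^ 2 :=
          mul_lt_mul_of_pos_right e3 hEsq
      _ = S2 * ((N : ℝ) ^ 6 * (Ecard G x ε t : ℝ) ^ 2) := by ring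
  linarith
end
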